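/- The length of a list segment equals the size of the heap: if (s,h) ⊨ sls(x,y), then h^{|dom(h)|}(s(x)) = s(y), where h^k denotes k-fold iteration of the heap partial function, and moreover h^i(s(x)) ≠ s(y) for all i < |dom(h)|. -/
import Mathlib


section

variable {Vars Loc : Type*}

/-- Domain of a heap. -/
def hdom (h : Loc → Option Loc) : Set Loc := {l | h l ≠ none}

/-- Image of a heap. -/
def himg (h : Loc → Option Loc) : Set Loc := {l | ∃ l', h l' = some l}

/-- Disjointness of heaps (disjoint domains). -/
def HDisj (h1 h2 : Loc → Option Loc) : Prop := Disjoint (hdom h1) (hdom h2)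

/-- Disjoint union of heaps (left-biased union, used under disjointness). -/
def hunion (h1 h2 : Loc → Option Loc) : Loc → Option Loc :=
  fun l => (h1 l).orElse (fun _ => h2 l)

/-- The singly-linked list segment predicate `sls`, defined inductively:
either the segment is empty (`a = b`, empty heap), or `a ≠ b`, `a` points to
some `l`, and the rest of the heap is a list segment from `l` to `b`. -/
inductive Sls : (Loc → Option Loc) → Loc → Loc → Prop
  | nil (h : Loc → Option Loc) (a : Loc) (he : ∀ l, h l = none) : Sls h a a
  | cons (h h' : Loc → Option Loc) (a b l : Loc) (hab : a ≠ b)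
      (ha : h a = some l) (ha' : h' a = none)
      (hrest : ∀ m, m ≠ a → h m = h' m) (tail : Sls h' l b) : Sls h a b

/-- `k`-fold iterate of the heap partial function (undefined if an
intermediate step is undefined). -/
def pit (h : Loc → Option Loc) : ℕ → Loc → Option Loc
  | 0, x => some x
  | n + 1, x => (h x).bind (pit h n)

lemma pit_succ' (h : Loc → Option Loc) (n : ℕ) (x : Loc) :
    pit h (n + 1) x = (pit h n x).bind h := by
  induction n generalizing x with
  | zero => simp [pit]
  | succ n ih =>
    show (h x).bind (pit h (n + 1)) = _
    cases hx : h x with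
    | none => simp [pit, hx]
    | some y => simpa [pit, hx] using ih y

lemma sls_key {h : Loc → Option Loc} {a b : Loc} (hsls : Sls h a b) :
    (hdom h).Finite ∧ h b = none ∧
    ∀ i ≤ (hdom h).ncard, ∃ v, pit h i a = some v ∧
      (i < (hdom h).ncard → v ∈ hdom h) ∧ (i = (hdom h).ncard → v = b) := by
  induction hsls with
  | nil h a he =>
    have hd : hdom h = ∅ := by ext m; simp [hdom, he]
    refine ⟨by simp [hd], he a, ?_⟩
    intro i hi
    simp only [hd, Set.ncard_empty, Nat.le_zero] at hi ⊢
    subst hi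
    exact ⟨a, rfl, by simp⟩
  | cons h h' a b l hab ha ha' hrest tail ih =>
    obtain ⟨hf', hb', hkey'⟩ := ih
    have hna : a ∉ hdom h' := by simp [hdom, ha']
    have hd : hdom h = insert a (hdom h') := by
      ext m
      by_cases hm : m = a
      · subst hm; simp [hdom, ha]
      · simp [hdom, hrest m hm, hm]
    have hf : (hdom h).Finite := by rw [hd]; exact hf'.insert a
    have hn : (hdom h).ncard = (hdom h').ncard + 1 := by
      rw [hd, Set.ncard_insert_of_notMem hna hf']
    have hba : b ≠ a := fun hba => hab hba.symm
    have hbn : h b = none := by rw [hrest b hba]; exact hb'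
    -- iterates from l agree between h and h'
    have hagree : ∀ j ≤ (hdom h').ncard, pit h j l = pit h' j l := by
      intro j hj
      induction j with
      | zero => rfl
      | succ j ihj =>
        have hj' : j ≤ (hdom h').ncard := Nat.le_of_succ_le hj
        obtain ⟨v, hv, hv1, _⟩ := hkey' j hj'
        have hva : v ≠ a := fun hva =>
          hna (hva ▸ hv1 (Nat.lt_of_succ_le hj))
        rw [pit_succ', pit_succ', ihj hj', hv, Option.bind_some,
          Option.bind_some, hrest v hva]
    refine ⟨hf, hbn, ?_⟩
    intro i hi
    cases i with
    | zero =>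
      refine ⟨a, rfl, fun _ => by simp [hdom, ha], fun h0 => ?_⟩
      omega
    | succ j =>
      have hj : j ≤ (hdom h').ncard := by omega
      obtain ⟨v, hv, hv1, hv2⟩ := hkey' j hj
      refine ⟨v, ?_, ?_, ?_⟩
      · show (h a).bind (pit h j) = some v
        rw [ha, Option.bind_some, hagree j hj, hv]
      · intro hlt
        rw [hd]
        exact Set.mem_insert_of_mem a (hv1 (by omega))
      · intro heq; exact hv2 (by omega)

/-- The length of a list segment equals the size of the heap: iterating `h`
exactly `|dom h|` times from the root reaches the sink, and never earlier. -/
theorem stmt16 (s : Vars → Loc) (x y : Vars) (h : Loc → Option Loc)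
    (hsls : Sls h (s x) (s y)) :
    pit h ((hdom h).ncard) (s x) = some (s y) ∧
    ∀ i < (hdom h).ncard, pit h i (s x) ≠ some (s y) := by
  obtain ⟨hf, hbn, hkey⟩ := sls_key hsls
  constructor
  · obtain ⟨v, hv, _, hv2⟩ := hkey _ le_rfl
    rw [hv, hv2 rfl]
  · intro i hi hcon
    obtain ⟨v, hv, hv1, _⟩ := hkey i hi.le
    rw [hcon] at hv
    have : s y ∈ hdom h := Option.some.inj hv ▸ hv1 hi
    exact this hbn

end
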